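/- For each dimension d ≥ 1 there is a constant C_d > 0 with the following property: for every α ∈ ℝ^d, every ε > 0, and every positive integer N, there exists a subgroup Λ of ℤ^d such that R_N(α, ε) ⊆ Λ ∩ (−N, N)^d ⊆ R_N(α, C_d·N^d·ε), where R_N(α, ε) = { n ∈ ℤ^d : ‖n‖_∞ < N and |Σ_{i=1}^d n_i α_i| < ε }. -/

import Mathlib

open Matrix Finset

/-- Coefficient bound via Cramer's rule: if an integer vector `y` with entries `< N`
is a real linear combination of linearly independent integer vectors `v k` with entries `< N`,
then the coefficients are at most `r! * N^r`. -/
lemma coeff_bound {d r N : ℕ} (hN : 0 < N)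
    (v : Fin r → (Fin d → ℤ)) (hv : ∀ k i, |v k i| < (N : ℤ))
    (hind : LinearIndependent ℝ (fun k (i : Fin d) => ((v k i : ℝ))))
    (y : Fin d → ℤ) (hy : ∀ i, |y i| < (N : ℤ))
    (c : Fin r → ℝ) (hc : ∀ i, (y i : ℝ) = ∑ k, c k * (v k i)) (k : Fin r) :
    |c k| ≤ (r.factorial : ℝ) * (N : ℝ) ^ r := by
  classical
  set B : Matrix (Fin r) (Fin d) ℝ := Matrix.of fun k i => ((v k i : ℝ)) with hB
  have hBrank : B.rank = r := by
    have := hind.rank_matrix (M := B)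
    simpa using this
  have hspan : Submodule.span ℝ (Set.range Bᵀ) = ⊤ := by
    apply Submodule.eq_top_of_finrank_eq
    rw [show Set.range Bᵀ = Set.range B.col from rfl, ← Matrix.rank_eq_finrank_span_cols, hBrank, Module.finrank_fin_fun]
  obtain ⟨t, hts, htspan, htind⟩ := exists_linearIndependent ℝ (Set.range Bᵀ)
  rw [hspan] at htspan
  let bas : Module.Basis t ℝ (Fin r → ℝ) := Module.Basis.mk htind (by rw [Subtype.range_coe, htspan])
  haveI : Fintype t := FiniteDimensional.fintypeBasisIndex bas
  have hcard : Fintype.card t = r := by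
    have := Module.finrank_eq_card_basis bas
    rw [Module.finrank_fin_fun] at this
    omega
  let e : Fin r ≃ t := (Fintype.equivFinOfCardEq hcard).symm
  have hchoice : ∀ l : Fin r, ∃ i : Fin d, Bᵀ i = ((e l : Fin r → ℝ)) := fun l => hts (e l).2
  choose g hg using hchoice
  set M : Matrix (Fin r) (Fin r) ℝ := Bᵀ.submatrix g id with hM
  have hrows : LinearIndependent ℝ (fun l => M l) := by
    have h1 : (fun l => M l) = (Subtype.val ∘ e) := by
      funext l
      have : M l = Bᵀ (g l) := rfl
      rw [this, hg l]; rfl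
    rw [h1]
    exact htind.comp e e.injective
  have hunit : IsUnit M := Matrix.linearIndependent_rows_iff_isUnit.mp hrows
  have hdet0 : M.det ≠ 0 := by
    intro h
    have := hunit.map Matrix.detMonoidHom
    rw [Matrix.coe_detMonoidHom] at this
    rw [h] at this
    exact not_isUnit_zero this
  set y' : Fin r → ℝ := fun l => ((y (g l) : ℝ)) with hy'
  have hMc : M *ᵥ c = y' := by
    funext l
    have : (M *ᵥ c) l = ∑ k', c k' * ((v k' (g l) : ℝ)) := by
      simp only [Matrix.mulVec, dotProduct]
      exact Finset.sum_congr rfl fun k' _ => mul_comm _ _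
    rw [this, hy', ← hc (g l)]
  have key : M.det * c k = (M.updateCol k y').det := by
    have h1 : M.adjugate *ᵥ (M *ᵥ c) = M.det • c := by
      rw [Matrix.mulVec_mulVec, Matrix.adjugate_mul, Matrix.smul_mulVec,
        Matrix.one_mulVec]
    rw [hMc] at h1
    have h2 := Matrix.cramer_eq_adjugate_mulVec M y'
    have h3 : Matrix.cramer M y' k = (M.det • c) k := by rw [h2, h1]
    rw [Matrix.cramer_apply] at h3
    simpa [mul_comm] using h3.symm
  -- integrality: |det M| ≥ 1
  set Mz : Matrix (Fin r) (Fin r) ℤ := Matrix.of fun l k' => v k' (g l) with hMz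
  have hMmap : M = Mz.map (fun z => (z : ℝ)) := by
    ext l k'
    rfl
  have hdz : M.det = ((Mz.det : ℤ) : ℝ) := by
    rw [hMmap]
    exact ((Int.castRingHom ℝ).map_det Mz).symm
  have h1le : (1 : ℝ) ≤ |M.det| := by
    rw [hdz]
    have hz : Mz.det ≠ 0 := by
      intro h
      rw [hdz, h] at hdet0
      simp at hdet0
    rw [← Int.cast_abs]
    exact_mod_cast Int.one_le_abs hz
  -- entry bound on the updated matrix
  have hupd : ∀ l k', |(M.updateCol k y') l k'| ≤ (N : ℝ) := by
    intro l k'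
    rw [Matrix.updateCol_apply]
    split
    · rw [hy']
      rw [← Int.cast_abs]
      exact_mod_cast (hy (g l)).le
    · have : M l k' = ((v k' (g l) : ℝ)) := rfl
      rw [this, ← Int.cast_abs]
      exact_mod_cast (hv k' (g l)).le
  have hdetle : |(M.updateCol k y').det| ≤ (r.factorial : ℝ) * (N : ℝ) ^ r := by
    have h := Matrix.det_le (A := M.updateCol k y') (abv := AbsoluteValue.abs)
      (x := (N : ℝ)) (fun i j => hupd i j)
    simpa [Fintype.card_fin, nsmul_eq_mul] using h
  calc |c k| ≤ |M.det| * |c k| :=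
        le_mul_of_one_le_left (abs_nonneg _) h1le
    _ = |(M.updateCol k y').det| := by rw [← abs_mul, key]
    _ ≤ (r.factorial : ℝ) * (N : ℝ) ^ r := hdetle

theorem lattice_approximation (d : ℕ) (hd : 1 ≤ d) :
    ∃ C : ℝ, 0 < C ∧ ∀ (α : Fin d → ℝ) (ε : ℝ), 0 < ε → ∀ N : ℕ, 0 < N →
      ∃ Λ : AddSubgroup (Fin d → ℤ),
        {n : Fin d → ℤ | (∀ i, |n i| < (N : ℤ)) ∧ |∑ i, (n i : ℝ) * α i| < ε} ⊆
          (Λ : Set (Fin d → ℤ)) ∩ {n | ∀ i, |n i| < (N : ℤ)} ∧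
        (Λ : Set (Fin d → ℤ)) ∩ {n | ∀ i, |n i| < (N : ℤ)} ⊆
          {n : Fin d → ℤ | (∀ i, |n i| < (N : ℤ)) ∧
            |∑ i, (n i : ℝ) * α i| < C * (N : ℝ) ^ d * ε} := by
  classical
  refine ⟨(d : ℝ) * (d.factorial : ℝ) + 1, by positivity, ?_⟩
  intro α ε hε N hN
  set R : Set (Fin d → ℤ) :=
    {n : Fin d → ℤ | (∀ i, |n i| < (N : ℤ)) ∧ |∑ i, (n i : ℝ) * α i| < ε} with hR
  let f : (Fin d → ℤ) →+ (Fin d → ℝ) :=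
    { toFun := fun n i => ((n i : ℝ))
      map_zero' := by funext i; simp
      map_add' := by intro a b; funext i; simp }
  set V : Submodule ℝ (Fin d → ℝ) := Submodule.span ℝ (f '' R) with hV
  refine ⟨V.toAddSubgroup.comap f, ?_, ?_⟩
  · intro n hn
    exact ⟨Submodule.subset_span ⟨n, hn, rfl⟩, hn.1⟩
  · rintro n ⟨hnV, hnbox⟩
    refine ⟨hnbox, ?_⟩
    have hnV' : f n ∈ V := hnV
    obtain ⟨t, hts, htspan, htind⟩ := exists_linearIndependent ℝ (f '' R)
    have htfin : t.Finite := htind.setFinite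
    haveI : Fintype t := htfin.fintype
    set r := Fintype.card t with hr
    have hrd : r ≤ d := by
      have h := htind.fintype_card_le_finrank
      rwa [Module.finrank_fin_fun] at h
    let e : Fin r ≃ t := (Fintype.equivFin t).symm
    have hchoice : ∀ l : Fin r, ∃ m : Fin d → ℤ, m ∈ R ∧ f m = ((e l : Fin d → ℝ)) := by
      intro l
      obtain ⟨m, hm, hfm⟩ := hts (e l).2
      exact ⟨m, hm, hfm⟩
    choose v hvR hvf using hchoice
    have hrange : Set.range (fun l => f (v l)) = t := by
      have h1 : (fun l => f (v l)) = (Subtype.val ∘ e) := funext fun l => hvf l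
      rw [h1, Set.range_comp, e.surjective.range_eq, Set.image_univ, Subtype.range_coe]
    have hmem : f n ∈ Submodule.span ℝ (Set.range (fun l => f (v l))) := by
      rw [hrange, htspan]
      exact hnV'
    obtain ⟨c, hcsum⟩ := (Submodule.mem_span_range_iff_exists_fun ℝ).mp hmem
    have hc : ∀ i, (n i : ℝ) = ∑ l, c l * (v l i) := by
      intro i
      have h1 := congrFun hcsum i
      have h2 : (∑ l, c l • f (v l)) i = ∑ l, c l * ((v l i : ℝ)) := by
        rw [Finset.sum_apply]
        exact Finset.sum_congr rfl fun l _ => rfl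
      rw [h2] at h1
      exact h1.symm
    have hind : LinearIndependent ℝ (fun l (i : Fin d) => ((v l i : ℝ))) := by
      have h1 : (fun l (i : Fin d) => ((v l i : ℝ))) = (Subtype.val ∘ e) :=
        funext fun l => hvf l
      rw [h1]
      exact htind.comp e e.injective
    have hcb : ∀ l, |c l| ≤ (r.factorial : ℝ) * (N : ℝ) ^ r :=
      fun l => coeff_bound hN v (fun l i => (hvR l).1 i) hind n hnbox c hc l
    have hsum : ∑ i, (n i : ℝ) * α i = ∑ l, c l * (∑ i, ((v l i : ℝ)) * α i) := by
      calc ∑ i, (n i : ℝ) * α i = ∑ i, (∑ l, c l * (v l i)) * α i :=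
            Finset.sum_congr rfl fun i _ => by rw [hc i]
        _ = ∑ i, ∑ l, c l * (v l i) * α i := by
            exact Finset.sum_congr rfl fun i _ => Finset.sum_mul _ _ _
        _ = ∑ l, ∑ i, c l * (v l i) * α i := Finset.sum_comm
        _ = ∑ l, c l * (∑ i, ((v l i : ℝ)) * α i) := by
            refine Finset.sum_congr rfl fun l _ => ?_
            rw [Finset.mul_sum]
            exact Finset.sum_congr rfl fun i _ => by ring
    rw [hsum]
    have hNpos : (0 : ℝ) < (N : ℝ) ^ d := by positivity
    have hterm : ∀ l, |c l * (∑ i, ((v l i : ℝ)) * α i)| ≤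
        (d.factorial : ℝ) * (N : ℝ) ^ d * ε := by
      intro l
      rw [abs_mul]
      have h1 : |c l| ≤ (d.factorial : ℝ) * (N : ℝ) ^ d := by
        refine (hcb l).trans ?_
        have hf : (r.factorial : ℝ) ≤ (d.factorial : ℝ) := by
          exact_mod_cast Nat.factorial_le hrd
        have hp : (N : ℝ) ^ r ≤ (N : ℝ) ^ d := by
          apply pow_le_pow_right₀ _ hrd
          exact_mod_cast hN
        have h0 : (0 : ℝ) ≤ (N : ℝ) ^ r := by positivity
        calc (r.factorial : ℝ) * (N : ℝ) ^ r ≤ (d.factorial : ℝ) * (N : ℝ) ^ r :=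
              mul_le_mul_of_nonneg_right hf h0
          _ ≤ (d.factorial : ℝ) * (N : ℝ) ^ d := by
              apply mul_le_mul_of_nonneg_left hp
              positivity
      have h2 : |∑ i, ((v l i : ℝ)) * α i| ≤ ε := (hvR l).2.le
      calc |c l| * |∑ i, ((v l i : ℝ)) * α i| ≤
            ((d.factorial : ℝ) * (N : ℝ) ^ d) * ε := by
              apply mul_le_mul h1 h2 (abs_nonneg _)
              positivity
        _ = (d.factorial : ℝ) * (N : ℝ) ^ d * ε := rfl
    calc |∑ l, c l * (∑ i, ((v l i : ℝ)) * α i)| ≤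
          ∑ l, |c l * (∑ i, ((v l i : ℝ)) * α i)| := Finset.abs_sum_le_sum_abs _ _
      _ ≤ ∑ _l : Fin r, (d.factorial : ℝ) * (N : ℝ) ^ d * ε :=
          Finset.sum_le_sum fun l _ => hterm l
      _ = (r : ℝ) * ((d.factorial : ℝ) * (N : ℝ) ^ d * ε) := by
          rw [Finset.sum_const, Finset.card_univ, Fintype.card_fin, nsmul_eq_mul]
      _ ≤ (d : ℝ) * ((d.factorial : ℝ) * (N : ℝ) ^ d * ε) := by
          apply mul_le_mul_of_nonneg_right _ (by positivity)
          exact_mod_cast hrd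
      _ < ((d : ℝ) * (d.factorial : ℝ) + 1) * (N : ℝ) ^ d * ε := by
          have : (0 : ℝ) < (N : ℝ) ^ d * ε := by positivity
          nlinarith
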